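/- Let f, f' : ℝ^d → ℝ^d be C¹ diffeomorphisms, p, p' : ℝ^d → [0,∞) Lebesgue integrable, g, g' : ℝ^d → ℝ bounded measurable, and p_μ : ℝ^d → [0,∞) an integrable probability density whose Fourier transform is nonzero almost everywhere. Suppose that for almost every x ∈ ℝ^d: ∫ p(z)·p_μ(x − f(z)) dz = ∫ p'(z)·p_μ(x − f'(z)) dz and ∫ g(z)·p(z)·p_μ(x − f(z)) dz = ∫ g'(z)·p'(z)·p_μ(x − f'(z)) dz. Then, writing q := (p∘f⁻¹)·|det Df⁻¹| and q' := (p'∘f'⁻¹)·|det Df'⁻¹|, we have q = q' almost everywhere and (g∘f⁻¹)·q = (g'∘f'⁻¹)·q' almost everywhere on ℝ^d. -/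

import Mathlib

open scoped ContDiff RealInnerProductSpace
open MeasureTheory FourierTransform SchwartzMap Complex

/-- A smooth compactly supported function is a Schwartz function. -/
noncomputable def schwartzOfCompactSupport {V : Type*} [NormedAddCommGroup V] [NormedSpace ℝ V]
    (g : V → ℂ) (hg : ContDiff ℝ ∞ g) (hsupp : HasCompactSupport g) : SchwartzMap V ℂ where
  toFun := g
  smooth' := hg
  decay' := by
    intro k n
    have h1 : Continuous fun x => ‖x‖ ^ k * ‖iteratedFDeriv ℝ n g x‖ :=
      (continuous_norm.pow k).mul (hg.continuous_iteratedFDeriv (by exact_mod_cast le_top)).norm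
    have h2 : HasCompactSupport fun x => ‖x‖ ^ k * ‖iteratedFDeriv ℝ n g x‖ :=
      ((hsupp.iteratedFDeriv n).norm).mul_left
    obtain ⟨C, hC⟩ := h1.bounded_above_of_compact_support h2
    exact ⟨C, fun x => (le_abs_self _).trans (Real.norm_eq_abs _ ▸ hC x)⟩

variable {V : Type*} [NormedAddCommGroup V] [InnerProductSpace ℝ V] [FiniteDimensional ℝ V]
  [MeasurableSpace V] [BorelSpace V]

/-- The Fourier transform is injective on `L¹`: zero transform implies zero a.e. -/
lemma ae_eq_zero_of_fourier_eq_zero {R : V → ℂ} (hR : Integrable R)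
    (h : ∀ ξ, 𝓕 R ξ = 0) : R =ᵐ[volume] 0 := by
  apply ae_eq_zero_of_integral_contDiff_smul_eq_zero hR.locallyIntegrable
  intro g g_diff g_supp
  set gc : V → ℂ := fun x => (g x : ℂ) with hgc
  have gc_diff : ContDiff ℝ ∞ gc := Complex.ofRealCLM.contDiff.comp g_diff
  have gc_supp : HasCompactSupport gc := g_supp.comp_left (g := fun r : ℝ => (r : ℂ)) rfl
  set G := schwartzOfCompactSupport gc gc_diff gc_supp with hG
  set φ := (fourierTransformCLE ℂ (SchwartzMap V ℂ)).symm G with hφ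
  have hFφ : 𝓕 (⇑φ) = ⇑G := by
    have := (fourierTransformCLE ℂ (SchwartzMap V ℂ)).apply_symm_apply G
    calc 𝓕 (⇑φ) = ⇑(fourierTransformCLE ℂ (SchwartzMap V ℂ) φ) := by
          rfl
      _ = ⇑G := by rw [this]
  have key := VectorFourier.integral_fourierIntegral_smul_eq_flip
      (μ := (volume : Measure V)) (ν := (volume : Measure V)) (L := innerₗ V)
      Real.continuous_fourierChar continuous_inner φ.integrable hR
  rw [flip_innerₗ] at key
  have lhs_eq : (∫ ξ, (VectorFourier.fourierIntegral 𝐞 volume (innerₗ V) (⇑φ) ξ) • R ξ)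
      = ∫ x, g x • R x := by
    apply integral_congr_ae; filter_upwards with ξ
    have : VectorFourier.fourierIntegral 𝐞 volume (innerₗ V) (⇑φ) ξ = 𝓕 (⇑φ) ξ := rfl
    rw [this, hFφ]
    show (gc ξ) • R ξ = g ξ • R ξ
    simp [hgc, Complex.real_smul]
  have rhs_eq : (∫ x, (⇑φ x) • (VectorFourier.fourierIntegral 𝐞 volume (innerₗ V) R x)) = 0 := by
    have : ∀ x, VectorFourier.fourierIntegral 𝐞 volume (innerₗ V) R x = 0 := fun x => h x
    simp [this]
  rw [lhs_eq, rhs_eq] at key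
  exact key

/-- Fourier transform of a convolution is the product of the Fourier transforms. -/
lemma fourier_conv {a b : V → ℂ} (ha : Integrable a) (hb : Integrable b) (ξ : V) :
    𝓕 (fun x => ∫ y, a y * b (x - y)) ξ = 𝓕 a ξ * 𝓕 b ξ := by
  have hbase : Integrable (fun p : V × V => a p.2 * b (p.1 - p.2)) (volume.prod volume) :=
    ha.convolution_integrand (ContinuousLinearMap.mul ℂ ℂ) hb
  have hchar : Continuous fun p : V × V => (𝐞 (-⟪p.1, ξ⟫) : Circle) :=
    Real.continuous_fourierChar.comp ((continuous_fst.inner continuous_const).neg)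
  have hF : Integrable (fun p : V × V => 𝐞 (-⟪p.1, ξ⟫) • (a p.2 * b (p.1 - p.2)))
      (volume.prod volume) := by
    refine hbase.norm.mono' (hchar.aestronglyMeasurable.smul hbase.aestronglyMeasurable) ?_
    filter_upwards with p
    simp
  calc 𝓕 (fun x => ∫ y, a y * b (x - y)) ξ
      = ∫ x, ∫ y, 𝐞 (-⟪x, ξ⟫) • (a y * b (x - y)) := by
        rw [Real.fourier_eq]
        congr 1; ext x
        simp only [Circle.smul_def]
        exact (integral_const_mul _ _).symm
    _ = ∫ y, ∫ x, 𝐞 (-⟪x, ξ⟫) • (a y * b (x - y)) := integral_integral_swap hF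
    _ = ∫ y, (𝐞 (-⟪y, ξ⟫) • a y) * 𝓕 b ξ := by
        congr 1; ext y
        have := (MeasureTheory.integral_add_right_eq_self
          (μ := (volume : Measure V)) (fun x => 𝐞 (-⟪x, ξ⟫) • (a y * b (x - y))) y).symm
        rw [this]
        rw [Real.fourier_eq, ← integral_const_mul]
        congr 1; ext x
        have h1 : (⟪x + y, ξ⟫ : ℝ) = ⟪x, ξ⟫ + ⟪y, ξ⟫ := inner_add_left x y ξ
        simp only [add_sub_cancel_right, h1, neg_add, AddChar.map_add_eq_mul,
          Circle.smul_def, Circle.coe_mul, smul_eq_mul]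
        ring
    _ = 𝓕 a ξ * 𝓕 b ξ := by
        rw [integral_mul_const, Real.fourier_eq, Real.fourier_eq]

/-- Deconvolution: if two integrable densities have equal convolutions with a kernel whose
Fourier transform is a.e. nonvanishing, they agree a.e. -/
lemma ae_eq_of_conv_eq {q q' pm : V → ℝ} (hq : Integrable q) (hq' : Integrable q')
    (hpm : Integrable pm)
    (hft : ∀ᵐ ξ ∂(volume : Measure V), 𝓕 (fun x => (pm x : ℂ)) ξ ≠ 0)
    (hobs : ∀ᵐ x ∂(volume : Measure V), (∫ y, q y * pm (x - y)) = ∫ y, q' y * pm (x - y)) :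
    q =ᵐ[volume] q' := by
  set Qc : V → ℂ := fun y => (q y : ℂ) with hQc
  set Q'c : V → ℂ := fun y => (q' y : ℂ) with hQ'c
  set Pc : V → ℂ := fun y => (pm y : ℂ) with hPc
  have hQci : Integrable Qc := hq.ofReal
  have hQ'ci : Integrable Q'c := hq'.ofReal
  have hPci : Integrable Pc := hpm.ofReal
  have hconv : (fun x => ∫ y, Qc y * Pc (x - y)) =ᵐ[volume]
      (fun x => ∫ y, Q'c y * Pc (x - y)) := by
    filter_upwards [hobs] with x hx
    have e1 : (∫ y, Qc y * Pc (x - y)) = ((∫ y, q y * pm (x - y) : ℝ) : ℂ) := by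
      rw [show (fun y => Qc y * Pc (x - y)) = fun y => ((q y * pm (x - y) : ℝ) : ℂ) from by
        ext y; push_cast; ring]
      exact integral_ofReal (𝕜 := ℂ)
    have e2 : (∫ y, Q'c y * Pc (x - y)) = ((∫ y, q' y * pm (x - y) : ℝ) : ℂ) := by
      rw [show (fun y => Q'c y * Pc (x - y)) = fun y => ((q' y * pm (x - y) : ℝ) : ℂ) from by
        ext y; push_cast; ring]
      exact integral_ofReal (𝕜 := ℂ)
    rw [e1, e2, hx]
  have hFconv : ∀ ξ, 𝓕 Qc ξ * 𝓕 Pc ξ = 𝓕 Q'c ξ * 𝓕 Pc ξ := by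
    intro ξ
    rw [← fourier_conv hQci hPci ξ, ← fourier_conv hQ'ci hPci ξ]
    rw [Real.fourier_eq, Real.fourier_eq]
    exact integral_congr_ae (by filter_upwards [hconv] with x hx; rw [hx])
  have hae : (fun ξ => 𝓕 Qc ξ) =ᵐ[volume] fun ξ => 𝓕 Q'c ξ := by
    filter_upwards [hft] with ξ hξ
    exact mul_right_cancel₀ hξ (hFconv ξ)
  have hcontQ : Continuous (𝓕 Qc) :=
    VectorFourier.fourierIntegral_continuous Real.continuous_fourierChar continuous_inner hQci
  have hcontQ' : Continuous (𝓕 Q'c) :=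
    VectorFourier.fourierIntegral_continuous Real.continuous_fourierChar continuous_inner hQ'ci
  have heq : 𝓕 Qc = 𝓕 Q'c := (hcontQ.ae_eq_iff_eq volume hcontQ').mp hae
  have hsub : ∀ ξ, 𝓕 (fun y => Qc y - Q'c y) ξ = 0 := by
    intro ξ
    have : 𝓕 (fun y => Qc y - Q'c y) ξ = 𝓕 Qc ξ - 𝓕 Q'c ξ := by
      rw [Real.fourier_eq, Real.fourier_eq, Real.fourier_eq,
        ← integral_sub]
      · congr 1; ext y; rw [smul_sub]
      · exact (Real.fourierIntegral_convergent_iff ξ).2 hQci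
      · exact (Real.fourierIntegral_convergent_iff ξ).2 hQ'ci
    rw [this, heq, sub_self]
  have hzero : (fun y => Qc y - Q'c y) =ᵐ[volume] 0 :=
    ae_eq_zero_of_fourier_eq_zero (hQci.sub hQ'ci) hsub
  filter_upwards [hzero] with y hy
  have : (q y : ℂ) = (q' y : ℂ) := sub_eq_zero.mp hy
  exact_mod_cast this

/-- Change of variables for the generative model integral. -/
lemma cov_integral {d : ℕ} (f finv : EuclideanSpace ℝ (Fin d) → EuclideanSpace ℝ (Fin d))
    (hfinv : ContDiff ℝ 1 finv) (hfl : Function.LeftInverse finv f)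
    (hfr : Function.RightInverse finv f) (ρ : EuclideanSpace ℝ (Fin d) → ℝ)
    (pm : EuclideanSpace ℝ (Fin d) → ℝ) (x : EuclideanSpace ℝ (Fin d)) :
    (∫ z, ρ z * pm (x - f z)) = ∫ y, ρ (finv y) * |(fderiv ℝ finv y).det| * pm (x - y) := by
  have hder : ∀ y ∈ Set.univ, HasFDerivWithinAt finv (fderiv ℝ finv y) Set.univ y :=
    fun y _ => ((hfinv.differentiable one_ne_zero) y).hasFDerivAt.hasFDerivWithinAt
  have hinj : Set.InjOn finv Set.univ := hfr.injective.injOn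
  have himg : finv '' Set.univ = Set.univ := by
    rw [Set.image_univ]; exact hfl.surjective.range_eq
  have := integral_image_eq_integral_abs_det_fderiv_smul
    (volume : Measure (EuclideanSpace ℝ (Fin d)))
    MeasurableSet.univ hder hinj (fun z => ρ z * pm (x - f z))
  rw [himg] at this
  simp only [Measure.restrict_univ] at this
  rw [this]
  congr 1; ext y
  rw [hfr y]
  simp only [smul_eq_mul]; ring

/-- Integrability transfer under the change of variables. -/
lemma cov_integrable {d : ℕ} (f finv : EuclideanSpace ℝ (Fin d) → EuclideanSpace ℝ (Fin d))
    (hfinv : ContDiff ℝ 1 finv) (hfl : Function.LeftInverse finv f)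
    (hfr : Function.RightInverse finv f) {ρ : EuclideanSpace ℝ (Fin d) → ℝ}
    (hρ : Integrable ρ) :
    Integrable (fun y => ρ (finv y) * |(fderiv ℝ finv y).det|) := by
  have hder : ∀ y ∈ Set.univ, HasFDerivWithinAt finv (fderiv ℝ finv y) Set.univ y :=
    fun y _ => ((hfinv.differentiable one_ne_zero) y).hasFDerivAt.hasFDerivWithinAt
  have hinj : Set.InjOn finv Set.univ := hfr.injective.injOn
  have himg : finv '' Set.univ = Set.univ := by
    rw [Set.image_univ]; exact hfl.surjective.range_eq
  have := integrableOn_image_iff_integrableOn_abs_det_fderiv_smul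
    (volume : Measure (EuclideanSpace ℝ (Fin d))) MeasurableSet.univ hder hinj ρ
  rw [himg] at this
  simp only [IntegrableOn, Measure.restrict_univ] at this
  have h2 := this.mp hρ
  apply h2.congr
  filter_upwards with y
  simp only [smul_eq_mul]; ring

/-- If a noise density `p_μ` has a.e. nonzero Fourier transform and two additive-noise
generative models induce the same observed densities (for the input and for the
`g`-weighted input), then their pushforward densities and `g`-weighted pushforward
densities coincide almost everywhere. -/
theorem pushforward_densities_ae_eq_of_observed_eq
    {d : ℕ}
    (f finv f' f'inv : EuclideanSpace ℝ (Fin d) → EuclideanSpace ℝ (Fin d))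
    (hf : ContDiff ℝ 1 f) (hfinv : ContDiff ℝ 1 finv)
    (hfl : Function.LeftInverse finv f) (hfr : Function.RightInverse finv f)
    (hf' : ContDiff ℝ 1 f') (hf'inv : ContDiff ℝ 1 f'inv)
    (hf'l : Function.LeftInverse f'inv f') (hf'r : Function.RightInverse f'inv f')
    (p p' : EuclideanSpace ℝ (Fin d) → ℝ)
    (hpint : Integrable p) (hp0 : ∀ z, 0 ≤ p z)
    (hp'int : Integrable p') (hp'0 : ∀ z, 0 ≤ p' z)
    (g g' : EuclideanSpace ℝ (Fin d) → ℝ)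
    (hg : Measurable g) (hg' : Measurable g')
    (hgb : ∃ C, ∀ z, |g z| ≤ C) (hg'b : ∃ C, ∀ z, |g' z| ≤ C)
    (pμ : EuclideanSpace ℝ (Fin d) → ℝ)
    (hpμint : Integrable pμ) (hpμ0 : ∀ w, 0 ≤ pμ w) (hpμ1 : (∫ w, pμ w) = 1)
    (hft : ∀ᵐ ξ : EuclideanSpace ℝ (Fin d) ∂volume,
      𝓕 (fun x => (pμ x : ℂ)) ξ ≠ 0)
    (hobs1 : ∀ᵐ x : EuclideanSpace ℝ (Fin d) ∂volume,
      (∫ z, p z * pμ (x - f z)) = ∫ z, p' z * pμ (x - f' z))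
    (hobs2 : ∀ᵐ x : EuclideanSpace ℝ (Fin d) ∂volume,
      (∫ z, g z * p z * pμ (x - f z)) = ∫ z, g' z * p' z * pμ (x - f' z)) :
    ((fun x => p (finv x) * |(fderiv ℝ finv x).det|) =ᵐ[volume]
      fun x => p' (f'inv x) * |(fderiv ℝ f'inv x).det|) ∧
    ((fun x => g (finv x) * (p (finv x) * |(fderiv ℝ finv x).det|)) =ᵐ[volume]
      fun x => g' (f'inv x) * (p' (f'inv x) * |(fderiv ℝ f'inv x).det|)) := by
  have hq : Integrable (fun y => p (finv y) * |(fderiv ℝ finv y).det|) :=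
    cov_integrable f finv hfinv hfl hfr hpint
  have hq' : Integrable (fun y => p' (f'inv y) * |(fderiv ℝ f'inv y).det|) :=
    cov_integrable f' f'inv hf'inv hf'l hf'r hp'int
  have hgpint : Integrable (fun z => g z * p z) :=
    hpint.bdd_mul (c := hgb.choose) hg.aestronglyMeasurable
      (Filter.Eventually.of_forall fun z => (Real.norm_eq_abs _).le.trans_eq' rfl |>.trans (hgb.choose_spec z))
  have hgp'int : Integrable (fun z => g' z * p' z) :=
    hp'int.bdd_mul (c := hg'b.choose) hg'.aestronglyMeasurable
      (Filter.Eventually.of_forall fun z => (Real.norm_eq_abs _).le.trans_eq' rfl |>.trans (hg'b.choose_spec z))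
  have hgq : Integrable (fun y => g (finv y) * p (finv y) * |(fderiv ℝ finv y).det|) := by
    have := cov_integrable f finv hfinv hfl hfr hgpint
    exact this
  have hgq' : Integrable (fun y => g' (f'inv y) * p' (f'inv y) * |(fderiv ℝ f'inv y).det|) := by
    have := cov_integrable f' f'inv hf'inv hf'l hf'r hgp'int
    exact this
  have h1 : (fun x => p (finv x) * |(fderiv ℝ finv x).det|) =ᵐ[volume]
      fun x => p' (f'inv x) * |(fderiv ℝ f'inv x).det| := by
    apply ae_eq_of_conv_eq hq hq' hpμint hft
    filter_upwards [hobs1] with x hx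
    rw [← cov_integral f finv hfinv hfl hfr p pμ x,
      ← cov_integral f' f'inv hf'inv hf'l hf'r p' pμ x]
    exact hx
  have h2 : (fun x => g (finv x) * p (finv x) * |(fderiv ℝ finv x).det|) =ᵐ[volume]
      fun x => g' (f'inv x) * p' (f'inv x) * |(fderiv ℝ f'inv x).det| := by
    apply ae_eq_of_conv_eq hgq hgq' hpμint hft
    filter_upwards [hobs2] with x hx
    have e1 := cov_integral f finv hfinv hfl hfr (fun z => g z * p z) pμ x
    have e2 := cov_integral f' f'inv hf'inv hf'l hf'r (fun z => g' z * p' z) pμ x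
    rw [← e1, ← e2]
    exact hx
  refine ⟨h1, ?_⟩
  filter_upwards [h2] with x hx
  calc g (finv x) * (p (finv x) * |(fderiv ℝ finv x).det|)
      = g (finv x) * p (finv x) * |(fderiv ℝ finv x).det| := by ring
    _ = g' (f'inv x) * p' (f'inv x) * |(fderiv ℝ f'inv x).det| := hx
    _ = g' (f'inv x) * (p' (f'inv x) * |(fderiv ℝ f'inv x).det|) := by ring
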